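/- Let E be a compact infinite subset of ℂ that is invariant under multiplication by e^{2πi/m} for some m ∈ ℕ. Then for n ∈ ℕ and l ∈ {0,1,…,m−1}, the Chebyshev polynomial of degree nm+l for E has the form z^l · Q(z^m) for some monic polynomial Q of degree n; equivalently, the coefficient of z^j in T_{nm+l}^E vanishes whenever j − l is not a multiple of m. -/

import Mathlib

open Polynomial Complex

noncomputable def supNorm (E : Set ℂ) (P : Polynomial ℂ) : ℝ :=
  sSup ((fun z => ‖P.eval z‖) '' E)

theorem chebyshev_rotational_symmetry (E : Set ℂ) (hE : IsCompact E) (hinf : E.Infinite)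
    (m : ℕ) (hm : 0 < m)
    (hsym : (fun z => Complex.exp (2 * Real.pi * I / m) * z) '' E = E)
    (n l : ℕ) (hl : l < m) (T : Polynomial ℂ)
    (hT : T.Monic ∧ T.natDegree = n * m + l ∧
      ∀ P : Polynomial ℂ, P.Monic → P.natDegree = n * m + l → supNorm E T ≤ supNorm E P)
    (hUniq : ∀ P : Polynomial ℂ, P.Monic → P.natDegree = n * m + l →
      (∀ Q : Polynomial ℂ, Q.Monic → Q.natDegree = n * m + l →
        supNorm E P ≤ supNorm E Q) → P = T) :
    (∃ Q : Polynomial ℂ, Q.Monic ∧ Q.natDegree = n ∧ T = X ^ l * Q.comp (X ^ m)) ∧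
    ∀ j : ℕ, j % m ≠ l → T.coeff j = 0 := by
  obtain ⟨hTm, hTd, hTmin⟩ := hT
  set d := n * m + l with hd
  set ω : ℂ := Complex.exp (2 * Real.pi * I / m) with hω
  have hprim : IsPrimitiveRoot ω m := Complex.isPrimitiveRoot_exp m hm.ne'
  have habsω : ‖ω‖ = 1 := by
    have h2 : (2 * Real.pi * I / m : ℂ) = ((2 * Real.pi / m : ℝ) : ℂ) * I := by
      push_cast; ring
    rw [hω, h2, Complex.norm_exp_ofReal_mul_I]
  -- the rotated polynomial
  set P : Polynomial ℂ := T.scaleRoots ω with hP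
  have hPm : P.Monic := (monic_scaleRoots_iff ω).mpr hTm
  have hPd : P.natDegree = d := by rw [hP, natDegree_scaleRoots, hTd]
  have hPeval : ∀ z : ℂ, P.eval (ω * z) = ω ^ d * T.eval z := by
    intro z
    have h := scaleRoots_eval₂_mul (p := T) (RingHom.id ℂ) z ω
    rw [hTd] at h; exact h
  -- sup norms agree
  have hsup : supNorm E P = supNorm E T := by
    unfold _root_.supNorm
    congr 1
    conv_lhs => rw [← hsym, Set.image_image]
    apply Set.image_congr'
    intro z
    rw [hPeval z, norm_mul, norm_pow, habsω, one_pow, one_mul]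
  have hPT : P = T := by
    apply hUniq P hPm hPd
    intro Q hQm hQd
    rw [hsup]; exact hTmin Q hQm hQd
  -- coefficient vanishing
  have hcoeff : ∀ j : ℕ, j % m ≠ l → T.coeff j = 0 := by
    intro j hj
    by_cases hjd : d < j
    · exact coeff_eq_zero_of_natDegree_lt (hTd ▸ hjd)
    · push_neg at hjd
      by_contra hc
      have h1 : T.coeff j * ω ^ (d - j) = T.coeff j * 1 := by
        rw [mul_one]
        conv_rhs => rw [← hPT]
        rw [hP, coeff_scaleRoots, hTd]
      have hpow : ω ^ (d - j) = 1 := mul_left_cancel₀ hc h1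
      have hdvd : m ∣ d - j := (hprim.pow_eq_one_iff_dvd _).mp hpow
      obtain ⟨k, hk⟩ := hdvd
      have hdj : d = j + m * k := by omega
      have hmod : d % m = j % m := by rw [hdj, Nat.add_mul_mod_self_left]
      rw [hd, Nat.add_comm, Nat.add_mul_mod_self_right, Nat.mod_eq_of_lt hl] at hmod
      exact hj hmod.symm
  refine ⟨?_, hcoeff⟩
  -- construct Q
  set Q : Polynomial ℂ := ∑ i ∈ Finset.range (n + 1), C (T.coeff (i * m + l)) * X ^ i with hQ
  have hQcoeff : ∀ k, k ≤ n → Q.coeff k = T.coeff (k * m + l) := by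
    intro k hk
    rw [hQ, finset_sum_coeff]
    simp only [coeff_C_mul, coeff_X_pow, mul_ite, mul_one, mul_zero]
    rw [Finset.sum_ite_eq (Finset.range (n + 1)) k]
    simp [Nat.lt_succ_of_le hk]
  have hQn : Q.coeff n = 1 := by
    rw [hQcoeff n le_rfl]
    have h := hTm.coeff_natDegree
    rwa [hTd] at h
  have hQdle : Q.natDegree ≤ n := by
    apply natDegree_sum_le_of_forall_le
    intro i hi
    apply le_trans (natDegree_C_mul_le _ _)
    simpa using Nat.lt_succ_iff.mp (Finset.mem_range.mp hi)
  have hQmonic : Q.Monic := monic_of_natDegree_le_of_coeff_eq_one n hQdle hQn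
  have hQdeg : Q.natDegree = n := by
    refine le_antisymm hQdle (le_natDegree_of_ne_zero ?_)
    rw [hQn]; exact one_ne_zero
  refine ⟨Q, hQmonic, hQdeg, ?_⟩
  have hexp : X ^ l * Q.comp (X ^ m) =
      ∑ i ∈ Finset.range (n + 1), C (T.coeff (i * m + l)) * X ^ (i * m + l) := by
    rw [hQ]
    simp only [Polynomial.comp, eval₂_finset_sum, eval₂_mul, eval₂_C, eval₂_X_pow,
      Finset.mul_sum]
    refine Finset.sum_congr rfl fun i _ => ?_
    rw [← pow_mul, ← mul_assoc, mul_comm (X ^ l : Polynomial ℂ) (C _), mul_assoc, ← pow_add]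
    congr 1
    ring
  rw [hexp]
  ext j
  rw [finset_sum_coeff]
  simp only [coeff_C_mul, coeff_X_pow, mul_ite, mul_one, mul_zero]
  by_cases hjl : j % m = l
  · set i₀ := j / m with hi₀
    have hj0 : i₀ * m + l = j := by
      rw [mul_comm, ← hjl]; exact Nat.div_add_mod j m
    have hcond : ∀ i : ℕ, (j = i * m + l) ↔ (i = i₀) := by
      intro i
      constructor
      · intro h
        have him : i * m = i₀ * m := by omega
        exact Nat.eq_of_mul_eq_mul_right hm him
      · intro h; rw [h]; omega
    calc T.coeff j = ∑ i ∈ Finset.range (n + 1),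
          if i = i₀ then T.coeff (i * m + l) else 0 := by
          rw [Finset.sum_ite_eq' (Finset.range (n + 1)) i₀]
          by_cases hin : i₀ ≤ n
          · rw [if_pos (Finset.mem_range.mpr (Nat.lt_succ_of_le hin)), hj0]
          · rw [if_neg (by simpa using hin)]
            apply coeff_eq_zero_of_natDegree_lt
            rw [hTd]
            have h1 : n + 1 ≤ i₀ := by omega
            have h2 : (n + 1) * m ≤ i₀ * m := Nat.mul_le_mul_right m h1
            rw [Nat.succ_mul] at h2
            omega
      _ = _ := by
          refine Finset.sum_congr rfl fun i _ => ?_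
          rw [if_congr (Iff.symm (hcond i)) rfl rfl]
  · rw [hcoeff j hjl]
    refine (Finset.sum_eq_zero fun i _ => ?_).symm
    rw [if_neg]
    intro h
    apply hjl
    rw [h, Nat.add_comm, Nat.add_mul_mod_self_right, Nat.mod_eq_of_lt hl]
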